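/- For natural numbers n ≥ k ≥ 1, the coefficient of z^n in the formal power series ((1 - √(1-4z))/2)^k, where (1-√(1-4z))/2 is the generating function of Catalan numbers (i.e. the power series C(z) satisfying C(z) = z + C(z)², with C(0)=0), equals (k/n) · C(2n-k-1, n-1). -/

import Mathlib

open PowerSeries

private lemma coeff_pow_eq_zero_of_lt (f : PowerSeries ℚ)
    (h0 : PowerSeries.constantCoeff f = 0) {n k : ℕ} (h : n < k) :
    PowerSeries.coeff n (f ^ k) = 0 := by
  obtain ⟨g, hg⟩ := PowerSeries.X_dvd_iff.mpr h0
  rw [hg, mul_pow, PowerSeries.coeff_X_pow_mul', if_neg (by omega)]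

private lemma key (f : PowerSeries ℚ) (h0 : PowerSeries.constantCoeff f = 0)
    (hf : f = PowerSeries.X + f ^ 2) :
    ∀ m n k : ℕ, 2 * n - k = m → 1 ≤ k → k ≤ n →
      PowerSeries.coeff n (f ^ k) =
        ((2 * n - k - 1).choose (n - 1) : ℚ) - ((2 * n - k - 1).choose n : ℚ) := by
  have hsplit : ∀ g : PowerSeries ℚ, f * g = PowerSeries.X * g + f ^ 2 * g := by
    intro g
    conv_lhs => rw [hf]
    ring
  intro m
  induction m using Nat.strong_induction_on with
  | _ m IH =>
    intro n k hm hk hkn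
    -- recurrence: coeff n (f^k) = coeff (n-1) (f^(k-1)) + coeff n (f^(k+1))
    have hrec : PowerSeries.coeff n (f ^ k) =
        PowerSeries.coeff (n - 1) (f ^ (k - 1)) + PowerSeries.coeff n (f ^ (k + 1)) := by
      have hfk : f ^ k = PowerSeries.X * f ^ (k - 1) + f ^ (k + 1) := by
        have h1 : f ^ k = f * f ^ (k - 1) := by
          rw [← pow_succ']
          congr 1
          omega
        rw [h1, hsplit, ← pow_add]
        congr 2
        omega
      have hx := PowerSeries.coeff_succ_X_mul (R := ℚ) (n - 1) (f ^ (k - 1))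
      rw [show n - 1 + 1 = n by omega] at hx
      rw [hfk, map_add, hx]
    rcases eq_or_lt_of_le hkn with rfl | hlt
    · -- k = n  (n replaced by k)
      rcases Nat.eq_or_lt_of_le hk with h1 | h1
      · -- n = k = 1
        subst h1
        have hco : PowerSeries.coeff 1 f = 1 := by
          conv_lhs => rw [hf]
          rw [map_add, PowerSeries.coeff_one_X,
            coeff_pow_eq_zero_of_lt f h0 (show 1 < 2 by omega), add_zero]
        simpa using hco
      · -- 2 ≤ k = n
        rw [hrec, coeff_pow_eq_zero_of_lt f h0 (show k < k + 1 by omega), add_zero,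
          IH (2 * (k-1) - (k-1)) (by omega) (k-1) (k-1) rfl (by omega) le_rfl]
        have c1 : (2 * (k-1) - (k-1) - 1).choose (k - 1 - 1) = 1 := by
          rw [show 2 * (k-1) - (k-1) - 1 = k - 1 - 1 by omega]; exact Nat.choose_self _
        have c2 : (2 * (k-1) - (k-1) - 1).choose (k - 1) = 0 :=
          Nat.choose_eq_zero_of_lt (by omega)
        have c3 : (2 * k - k - 1).choose (k - 1) = 1 := by
          rw [show 2 * k - k - 1 = k - 1 by omega]; exact Nat.choose_self _
        have c4 : (2 * k - k - 1).choose k = 0 := Nat.choose_eq_zero_of_lt (by omega)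
        rw [c1, c2, c3, c4]
    · -- k < n
      rcases Nat.eq_or_lt_of_le hk with h1 | h1
      · -- k = 1, n ≥ 2
        subst h1
        rw [hrec]
        have hz : PowerSeries.coeff (n - 1) (f ^ (1 - 1)) = 0 := by
          simp only [Nat.sub_self, pow_zero]
          rw [PowerSeries.coeff_one, if_neg (by omega)]
        rw [hz, zero_add, IH (2 * n - 2) (by omega) n 2 rfl (by omega) (by omega)]
        rw [show 2 * n - 2 - 1 = 2 * n - 3 by omega, show 2 * n - 1 - 1 = 2 * n - 2 by omega]
        have p1 := Nat.choose_succ_succ (2 * n - 3) (n - 2)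
        rw [show (2 * n - 3).succ = 2 * n - 2 by omega, show (n - 2).succ = n - 1 by omega] at p1
        have p2 := Nat.choose_succ_succ (2 * n - 3) (n - 1)
        rw [show (2 * n - 3).succ = 2 * n - 2 by omega, show (n - 1).succ = n by omega] at p2
        have sym : (2 * n - 3).choose (n - 2) = (2 * n - 3).choose (n - 1) := by
          rw [← Nat.choose_symm (show n - 2 ≤ 2 * n - 3 by omega)]
          congr 1
          omega
        rw [p1, p2, sym]
        push_cast
        ring
      · -- 2 ≤ k < n
        rw [hrec,
          IH (2 * (n-1) - (k-1)) (by omega) (n-1) (k-1) rfl (by omega) (by omega),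
          IH (2 * n - (k+1)) (by omega) n (k+1) rfl (by omega) (by omega)]
        rw [show 2 * (n-1) - (k-1) - 1 = 2 * n - k - 2 by omega,
          show 2 * n - (k+1) - 1 = 2 * n - k - 2 by omega,
          show (n - 1) - 1 = n - 2 by omega]
        have p1 := Nat.choose_succ_succ (2 * n - k - 2) (n - 2)
        rw [show (2 * n - k - 2).succ = 2 * n - k - 1 by omega,
          show (n - 2).succ = n - 1 by omega] at p1
        have p2 := Nat.choose_succ_succ (2 * n - k - 2) (n - 1)
        rw [show (2 * n - k - 2).succ = 2 * n - k - 1 by omega,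
          show (n - 1).succ = n by omega] at p2
        rw [p1, p2]
        push_cast
        ring

theorem coeff_pow_catalan (f : PowerSeries ℚ) (h0 : PowerSeries.constantCoeff f = 0)
    (hf : f = PowerSeries.X + f ^ 2) (n k : ℕ) (hk : 1 ≤ k) (hkn : k ≤ n) :
    PowerSeries.coeff n (f ^ k) = (k : ℚ) / n * ((2 * n - k - 1).choose (n - 1) : ℚ) := by
  rw [key f h0 hf (2*n-k) n k rfl hk hkn]
  have hid : (2 * n - k - 1).choose n * n + (2 * n - k - 1).choose (n - 1) * k
      = (2 * n - k - 1).choose (n - 1) * n := by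
    have h1 := Nat.choose_succ_right_eq (2 * n - k - 1) (n - 1)
    rw [show n - 1 + 1 = n by omega, show 2 * n - k - 1 - (n - 1) = n - k by omega] at h1
    rw [h1, ← Nat.mul_add, Nat.sub_add_cancel hkn]
  have hn : (n : ℚ) ≠ 0 := Nat.cast_ne_zero.mpr (by omega)
  field_simp
  have hq := congrArg (fun x : ℕ => (x : ℚ)) hid
  push_cast at hq
  linarith
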